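/- Let ρ be a d×d density matrix and let Φ₁,…,Φ_N (N ≥ 2) be quantum channels on d×d matrices, where Φ_s has Kraus operators K₁ˢ,…,K_nˢ. Then for any permutations π₁,…,π_N of {1,…,n}, ∑_{s=1}^{N} I_ρ(Φ_s) ≥ (1/(2N−2)) { ∑_{1≤s<t≤N} ∑_{i=1}^{n} I_ρ(K^s_{π_s(i)} − K^t_{π_t(i)}) + (2/(N(N−1))) [ ∑_{1≤s<t≤N} √( ∑_{i=1}^{n} I_ρ(K^s_{π_s(i)} + K^t_{π_t(i)}) ) ]² }. -/

import Mathlib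

open Matrix Finset
open scoped ComplexOrder

/-- The former `Matrix.PosSemidef.sqrt` (removed from Mathlib), with its old definition. -/
noncomputable def psdSqrt {d : ℕ} {ρ : Matrix (Fin d) (Fin d) ℂ} (hρ : ρ.PosSemidef) :
    Matrix (Fin d) (Fin d) ℂ :=
  hρ.1.eigenvectorUnitary.1 * diagonal ((↑) ∘ (√·) ∘ hρ.1.eigenvalues) *
    (star hρ.1.eigenvectorUnitary : Matrix (Fin d) (Fin d) ℂ)

/-- Wigner–Yanase skew information `I_ρ(A) = (1/2) Tr([√ρ, A]† [√ρ, A])` of a matrix `A`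
with respect to a positive semidefinite matrix `ρ`, where `√ρ = hρ.sqrt` is the positive
semidefinite square root of `ρ`. -/
noncomputable def skewInfo {d : ℕ} {ρ : Matrix (Fin d) (Fin d) ℂ} (hρ : ρ.PosSemidef)
    (A : Matrix (Fin d) (Fin d) ℂ) : ℝ :=
  (1 / 2 : ℝ) *
    (((psdSqrt hρ * A - A * psdSqrt hρ)ᴴ * (psdSqrt hρ * A - A * psdSqrt hρ)).trace).re

lemma trace_conjTranspose_mul_self_re_nonneg {d : ℕ} (X : Matrix (Fin d) (Fin d) ℂ) :
    0 ≤ ((Xᴴ * X).trace).re := by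
  have h : (Xᴴ * X).trace = ∑ i, ∑ j, (starRingEnd ℂ) (X j i) * X j i := by
    simp [Matrix.trace, Matrix.diag, Matrix.mul_apply, Matrix.conjTranspose_apply]
  rw [h, Complex.re_sum]
  refine Finset.sum_nonneg fun i _ => ?_
  rw [Complex.re_sum]
  refine Finset.sum_nonneg fun j _ => ?_
  rw [← Complex.normSq_eq_conj_mul_self]
  simpa using Complex.normSq_nonneg (X j i)

lemma skewInfo_nonneg {d : ℕ} {ρ : Matrix (Fin d) (Fin d) ℂ} (hρ : ρ.PosSemidef)
    (A : Matrix (Fin d) (Fin d) ℂ) : 0 ≤ skewInfo hρ A := by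
  unfold skewInfo
  have := trace_conjTranspose_mul_self_re_nonneg (psdSqrt hρ * A - A * psdSqrt hρ)
  linarith

lemma skewInfo_parallelogram {d : ℕ} {ρ : Matrix (Fin d) (Fin d) ℂ} (hρ : ρ.PosSemidef)
    (A B : Matrix (Fin d) (Fin d) ℂ) :
    skewInfo hρ (A - B) + skewInfo hρ (A + B) = 2 * (skewInfo hρ A + skewInfo hρ B) := by
  unfold skewInfo
  set S := psdSqrt hρ with hS
  have h1 : S * (A - B) - (A - B) * S = (S * A - A * S) - (S * B - B * S) := by noncomm_ring
  have h2 : S * (A + B) - (A + B) * S = (S * A - A * S) + (S * B - B * S) := by noncomm_ring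
  rw [h1, h2]
  set X := S * A - A * S
  set Y := S * B - B * S
  have key : (X - Y)ᴴ * (X - Y) + (X + Y)ᴴ * (X + Y)
      = (Xᴴ * X + Xᴴ * X) + (Yᴴ * Y + Yᴴ * Y) := by
    simp only [Matrix.conjTranspose_sub, Matrix.conjTranspose_add]
    noncomm_ring
  have h3 := congrArg (fun M : Matrix (Fin d) (Fin d) ℂ => (Matrix.trace M).re) key
  simp only [Matrix.trace_add, Complex.add_re] at h3
  linarith

lemma double_sum_identity {N : ℕ} (hN : 1 ≤ N) (a : Fin N → ℝ) :
    ∑ s : Fin N, ∑ t ∈ Finset.Ioi s, (2 * (a s + a t))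
      = (2 * (N : ℝ) - 2) * ∑ s, a s := by
  have step : ∀ s t : Fin N, 2 * (a s + a t) = 2 * a s + 2 * a t := fun s t => by ring
  calc ∑ s : Fin N, ∑ t ∈ Finset.Ioi s, (2 * (a s + a t))
      = (∑ s : Fin N, ∑ _t ∈ Finset.Ioi s, (2 * a s))
        + ∑ s : Fin N, ∑ t ∈ Finset.Ioi s, (2 * a t) := by
        simp_rw [step, Finset.sum_add_distrib]
    _ = (∑ s : Fin N, ((Finset.Ioi s).card : ℝ) * (2 * a s))
        + ∑ t : Fin N, ((Finset.Iio t).card : ℝ) * (2 * a t) := by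
        congr 1
        · exact Finset.sum_congr rfl fun s _ => by rw [Finset.sum_const, nsmul_eq_mul]
        · rw [Finset.sum_comm' (s := Finset.univ) (t := fun s : Fin N => Finset.Ioi s)
            (t' := Finset.univ) (s' := fun t : Fin N => Finset.Iio t)
            (fun x y => by simp [Finset.mem_Ioi, Finset.mem_Iio])]
          exact Finset.sum_congr rfl fun t _ => by rw [Finset.sum_const, nsmul_eq_mul]
    _ = ∑ s : Fin N, (((Finset.Ioi s).card : ℝ) + ((Finset.Iio s).card : ℝ)) * (2 * a s) := by
        rw [← Finset.sum_add_distrib]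
        exact Finset.sum_congr rfl fun s _ => by ring
    _ = ∑ s : Fin N, ((N : ℝ) - 1) * (2 * a s) := by
        refine Finset.sum_congr rfl fun s _ => ?_
        have hs := s.isLt
        have h1 : ((Finset.Ioi s).card : ℝ) + ((Finset.Iio s).card : ℝ) = (N : ℝ) - 1 := by
          rw [Fin.card_Ioi, Fin.card_Iio]
          have h2 : (N - 1 - s.val) + s.val = N - 1 := by omega
          have h3 := congrArg (Nat.cast : ℕ → ℝ) h2
          push_cast [Nat.cast_sub hN] at h3
          linarith
        rw [h1]
    _ = (2 * (N : ℝ) - 2) * ∑ s, a s := by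
        rw [Finset.mul_sum]
        exact Finset.sum_congr rfl fun s _ => by ring

theorem stmt_2 {d n N : ℕ} (hN : 2 ≤ N)
    (ρ : Matrix (Fin d) (Fin d) ℂ) (hρ : ρ.PosSemidef) (htr : ρ.trace = 1)
    (K : Fin N → Fin n → Matrix (Fin d) (Fin d) ℂ)
    (hK : ∀ s, ∑ i, (K s i)ᴴ * K s i = 1)
    (π : Fin N → Equiv.Perm (Fin n)) :
    ∑ s, ∑ i, skewInfo hρ (K s i) ≥
      (1 / (2 * (N : ℝ) - 2)) *
        ((∑ s : Fin N, ∑ t ∈ Finset.Ioi s, ∑ i, skewInfo hρ (K s (π s i) - K t (π t i)))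
          + (2 / ((N : ℝ) * ((N : ℝ) - 1))) *
            (∑ s : Fin N, ∑ t ∈ Finset.Ioi s,
              Real.sqrt (∑ i, skewInfo hρ (K s (π s i) + K t (π t i)))) ^ 2) := by
  have hperm : ∀ s : Fin N, ∑ i, skewInfo hρ (K s (π s i)) = ∑ i, skewInfo hρ (K s i) :=
    fun s => Equiv.sum_comp (π s) (fun i => skewInfo hρ (K s i))
  -- parallelogram for each pair
  have hDS : ∀ s t : Fin N,
      (∑ i, skewInfo hρ (K s (π s i) - K t (π t i)))
        + (∑ i, skewInfo hρ (K s (π s i) + K t (π t i)))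
      = 2 * ((∑ i, skewInfo hρ (K s i)) + ∑ i, skewInfo hρ (K t i)) := by
    intro s t
    rw [← Finset.sum_add_distrib]
    rw [Finset.sum_congr rfl
      (fun i _ => skewInfo_parallelogram hρ (K s (π s i)) (K t (π t i)))]
    rw [← hperm s, ← hperm t, ← Finset.sum_add_distrib, Finset.mul_sum]
  -- key sum identity
  have hsum : (∑ s : Fin N, ∑ t ∈ Finset.Ioi s, ∑ i, skewInfo hρ (K s (π s i) - K t (π t i)))
      + (∑ s : Fin N, ∑ t ∈ Finset.Ioi s, ∑ i, skewInfo hρ (K s (π s i) + K t (π t i)))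
      = (2 * (N : ℝ) - 2) * ∑ s, ∑ i, skewInfo hρ (K s i) := by
    rw [← Finset.sum_add_distrib]
    have e : ∀ s : Fin N, (∑ t ∈ Finset.Ioi s, ∑ i, skewInfo hρ (K s (π s i) - K t (π t i)))
        + (∑ t ∈ Finset.Ioi s, ∑ i, skewInfo hρ (K s (π s i) + K t (π t i)))
        = ∑ t ∈ Finset.Ioi s,
            (2 * ((∑ i, skewInfo hρ (K s i)) + ∑ i, skewInfo hρ (K t i))) := by
      intro s
      rw [← Finset.sum_add_distrib]
      exact Finset.sum_congr rfl fun t _ => hDS s t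
    rw [Finset.sum_congr rfl fun s _ => e s]
    exact double_sum_identity (by omega) _
  -- nonnegativity
  have hSnn : ∀ s t : Fin N, 0 ≤ ∑ i, skewInfo hρ (K s (π s i) + K t (π t i)) :=
    fun s t => Finset.sum_nonneg fun i _ => skewInfo_nonneg hρ _
  have hSSnn : 0 ≤ ∑ s : Fin N, ∑ t ∈ Finset.Ioi s, ∑ i, skewInfo hρ (K s (π s i) + K t (π t i)) :=
    Finset.sum_nonneg fun s _ => Finset.sum_nonneg fun t _ => hSnn s t
  have hDnn : 0 ≤ ∑ s : Fin N, ∑ t ∈ Finset.Ioi s, ∑ i, skewInfo hρ (K s (π s i) - K t (π t i)) :=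
    Finset.sum_nonneg fun s _ => Finset.sum_nonneg fun t _ =>
      Finset.sum_nonneg fun i _ => skewInfo_nonneg hρ _
  -- the pair finset and its cardinality
  have hcard2 : ((Finset.univ.sigma (fun s : Fin N => Finset.Ioi s)).card : ℝ) * 2 = (N : ℝ) * ((N : ℝ) - 1) := by
    have h1 : (Finset.univ.sigma (fun s : Fin N => Finset.Ioi s)).card = ∑ s : Fin N, (Finset.Ioi s).card := Finset.card_sigma _ _
    have h2 : ∑ s : Fin N, (Finset.Ioi s).card = ∑ k ∈ Finset.range N, (N - 1 - k) := by
      rw [show (fun s : Fin N => (Finset.Ioi s).card) = fun s : Fin N => N - 1 - s.val from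
        funext fun s => Fin.card_Ioi s]
      exact Fin.sum_univ_eq_sum_range (fun k => N - 1 - k) N
    have h3 : ∑ k ∈ Finset.range N, (N - 1 - k) = ∑ k ∈ Finset.range N, k := by
      rw [← Finset.sum_range_reflect (fun i => i) N]
    have h4 : (Finset.univ.sigma (fun s : Fin N => Finset.Ioi s)).card * 2 = N * (N - 1) := by
      rw [h1, h2, h3, Finset.sum_range_id_mul_two]
    have h5 : ((N * (N - 1) : ℕ) : ℝ) = (N : ℝ) * ((N : ℝ) - 1) := by
      rw [Nat.cast_mul, Nat.cast_sub (by omega : 1 ≤ N)]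
      norm_num
    calc ((Finset.univ.sigma (fun s : Fin N => Finset.Ioi s)).card : ℝ) * 2 = (((Finset.univ.sigma (fun s : Fin N => Finset.Ioi s)).card * 2 : ℕ) : ℝ) := by push_cast; ring
      _ = (N : ℝ) * ((N : ℝ) - 1) := by rw [h4, h5]
  -- Cauchy–Schwarz
  have hCS : (∑ s : Fin N, ∑ t ∈ Finset.Ioi s,
        Real.sqrt (∑ i, skewInfo hρ (K s (π s i) + K t (π t i)))) ^ 2
      ≤ ((Finset.univ.sigma (fun s : Fin N => Finset.Ioi s)).card : ℝ) *
        ∑ s : Fin N, ∑ t ∈ Finset.Ioi s, ∑ i, skewInfo hρ (K s (π s i) + K t (π t i)) := by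
    have e1 : ∑ s : Fin N, ∑ t ∈ Finset.Ioi s,
          Real.sqrt (∑ i, skewInfo hρ (K s (π s i) + K t (π t i)))
        = ∑ p ∈ Finset.univ.sigma (fun s : Fin N => Finset.Ioi s), Real.sqrt (∑ i, skewInfo hρ (K p.1 (π p.1 i) + K p.2 (π p.2 i))) :=
      (Finset.sum_sigma Finset.univ (fun s : Fin N => Finset.Ioi s)
        (fun p => Real.sqrt (∑ i, skewInfo hρ (K p.1 (π p.1 i) + K p.2 (π p.2 i))))).symm
    have e2 : ∑ s : Fin N, ∑ t ∈ Finset.Ioi s, ∑ i, skewInfo hρ (K s (π s i) + K t (π t i))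
        = ∑ p ∈ Finset.univ.sigma (fun s : Fin N => Finset.Ioi s), ∑ i, skewInfo hρ (K p.1 (π p.1 i) + K p.2 (π p.2 i)) :=
      (Finset.sum_sigma Finset.univ (fun s : Fin N => Finset.Ioi s)
        (fun p => ∑ i, skewInfo hρ (K p.1 (π p.1 i) + K p.2 (π p.2 i)))).symm
    rw [e1, e2]
    have hcs := sq_sum_le_card_mul_sum_sq (s := Finset.univ.sigma (fun s : Fin N => Finset.Ioi s))
      (f := fun p => Real.sqrt (∑ i, skewInfo hρ (K p.1 (π p.1 i) + K p.2 (π p.2 i))))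
    have e3 : ∑ p ∈ Finset.univ.sigma (fun s : Fin N => Finset.Ioi s), Real.sqrt (∑ i, skewInfo hρ (K p.1 (π p.1 i) + K p.2 (π p.2 i))) ^ 2
        = ∑ p ∈ Finset.univ.sigma (fun s : Fin N => Finset.Ioi s), ∑ i, skewInfo hρ (K p.1 (π p.1 i) + K p.2 (π p.2 i)) :=
      Finset.sum_congr rfl fun p _ => Real.sq_sqrt (hSnn p.1 p.2)
    rw [e3] at hcs
    exact hcs
  -- final arithmetic
  have hNR : (2 : ℝ) ≤ (N : ℝ) := by exact_mod_cast hN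
  have h2N2 : (0 : ℝ) < 2 * (N : ℝ) - 2 := by linarith
  have hc : (0 : ℝ) < (N : ℝ) * ((N : ℝ) - 1) := by nlinarith
  have key : (2 / ((N : ℝ) * ((N : ℝ) - 1))) *
        (∑ s : Fin N, ∑ t ∈ Finset.Ioi s,
          Real.sqrt (∑ i, skewInfo hρ (K s (π s i) + K t (π t i)))) ^ 2
      ≤ ∑ s : Fin N, ∑ t ∈ Finset.Ioi s, ∑ i, skewInfo hρ (K s (π s i) + K t (π t i)) := by
    rw [div_mul_eq_mul_div, div_le_iff₀ hc, ← hcard2]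
    nlinarith [hCS]
  rw [ge_iff_le, div_mul_eq_mul_div, one_mul, div_le_iff₀ h2N2]
  nlinarith [key, hsum, hDnn]
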